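/- arXiv:2202.08351 — 2 statements merged into one kernel-verified Lean document; each statement's English description precedes it below -/
import Mathlib

section
/- (Gordan's Alternative Theorem) Let U: ℝ^n → ℝ^m be a linear map. Exactly one of the following holds: (a) there exists x ∈ ℝ^n with all components of Ux strictly positive; (b) there exists c ∈ ℝ^m with c ≥ 0 componentwise, c ≠ 0, and Uᵀc = 0. -/
open Matrix Finset

private lemma gordan_aux (m n : ℕ) (U : Matrix (Fin m) (Fin n) ℝ)
    (hb : ¬ ∃ c : Fin m → ℝ, (∀ i, 0 ≤ c i) ∧ c ≠ 0 ∧ Uᵀ.mulVec c = 0) :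
    ∃ x : Fin n → ℝ, ∀ i, 0 < U.mulVec x i := by
  set K : Set (Fin n → ℝ) := (Uᵀ.mulVecLin) '' stdSimplex ℝ (Fin m) with hK
  have hKconv : Convex ℝ K := (convex_stdSimplex ℝ _).linear_image Uᵀ.mulVecLin
  have hKcl : IsClosed K :=
    ((isCompact_stdSimplex ℝ (Fin m)).image (Uᵀ.mulVecLin.continuous_of_finiteDimensional)).isClosed
  have h0 : (0 : Fin n → ℝ) ∉ K := by
    rintro ⟨c, hc, hc0⟩
    refine hb ⟨c, hc.1, ?_, hc0⟩
    intro hcz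
    have := hc.2
    rw [hcz] at this
    simp at this
  obtain ⟨f, u, hfu, hK⟩ := geometric_hahn_banach_point_closed hKconv hKcl h0
  have hu : 0 < u := by simpa using hfu
  refine ⟨fun j => f (Pi.single j 1), fun i => ?_⟩
  have hmem : (fun k => U i k) ∈ K := by
    refine ⟨Pi.single i 1, ?_, ?_⟩
    · refine ⟨fun j => ?_, ?_⟩
      · by_cases h : j = i <;> simp [Pi.single_apply, h]
      · simp [Pi.single_apply]
    · ext k
      simp [Matrix.mulVecLin_apply, Matrix.mulVec, dotProduct, Pi.single_apply,
        mul_comm]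
  have hf : u < f (fun k => U i k) := hK _ hmem
  have hdec : f (fun k => U i k) = U.mulVec (fun j => f (Pi.single j 1)) i := by
    have : (fun k => U i k) = ∑ j : Fin n, U i j • (Pi.single j 1 : Fin n → ℝ) := by
      ext k
      simp [Pi.single_apply, Finset.sum_ite_eq', mul_comm]
    rw [this, map_sum]
    simp [Matrix.mulVec, dotProduct]
  rw [hdec] at hf
  exact lt_trans hu hf

/-- Gordan's Alternative Theorem: for a real `m×n` matrix `U`, exactly one of
the following holds: (a) there is `x` with `Ux > 0` componentwise;
(b) there is `c ≥ 0`, `c ≠ 0`, with `Uᵀc = 0`. -/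
theorem gordan_alternative (m n : ℕ) (U : Matrix (Fin m) (Fin n) ℝ) :
    Xor' (∃ x : Fin n → ℝ, ∀ i, 0 < U.mulVec x i)
      (∃ c : Fin m → ℝ, (∀ i, 0 ≤ c i) ∧ c ≠ 0 ∧ Uᵀ.mulVec c = 0) := by
  have excl : ¬ ((∃ x : Fin n → ℝ, ∀ i, 0 < U.mulVec x i) ∧
      (∃ c : Fin m → ℝ, (∀ i, 0 ≤ c i) ∧ c ≠ 0 ∧ Uᵀ.mulVec c = 0)) := by
    rintro ⟨⟨x, hx⟩, ⟨c, hc0, hcne, hcU⟩⟩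
    have h1 : c ⬝ᵥ U.mulVec x = 0 := by
      rw [Matrix.dotProduct_mulVec, ← Matrix.mulVec_transpose, hcU]
      simp
    have h2 : 0 < c ⬝ᵥ U.mulVec x := by
      obtain ⟨i0, hi0⟩ : ∃ i, c i ≠ 0 := by
        by_contra h
        push_neg at h
        exact hcne (funext h)
      refine Finset.sum_pos' (fun i _ => mul_nonneg (hc0 i) (hx i).le) ?_
      exact ⟨i0, Finset.mem_univ _, mul_pos ((hc0 i0).lt_of_ne (Ne.symm hi0)) (hx i0)⟩
    linarith
  by_cases hb : ∃ c : Fin m → ℝ, (∀ i, 0 ≤ c i) ∧ c ≠ 0 ∧ Uᵀ.mulVec c = 0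
  · exact Or.inr ⟨hb, fun ha => excl ⟨ha, hb⟩⟩
  · exact Or.inl ⟨gordan_aux m n U hb, hb⟩
end

section
/- With the test lattice basis B̃ = diag(1, …, 1, κ/2) ∈ ℝ^{d×d} (κ = 2⌈k/2⌉), one has Λ_{k,d}(B̃) = 2^{2-2/d} π² κ^{2/d}, where Λ_{k,d}(B) = λ_k(T_B)|det B|^{2/d} and λ_k(T_B) is the k-th smallest value (counted with multiplicity, indexed from 0 at value 0) of 4π²‖B^{-T}v‖² over v ∈ ℤ^d. -/
open Real Matrix

/-- The `k`-th Laplacian eigenvalue of the flat torus `ℝ^d/Bℤ^d`, via the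
Courant–Fischer formula (the `k`-th smallest value of `4π²‖B⁻ᵀv‖²` over
`v ∈ ℤ^d`, counted with multiplicity, indexed from 0). -/
noncomputable def lamk (d k : ℕ) (B : Matrix (Fin d) (Fin d) ℝ) : ℝ :=
  sInf { r : ℝ | ∃ E : Finset (Fin d → ℤ), E.card = k + 1 ∧
    r = sSup { t : ℝ | ∃ v ∈ E,
      t = 4 * π ^ 2 * ∑ i, ((B⁻¹)ᵀ.mulVec (fun j => ((v j : ℤ) : ℝ)) i) ^ 2 } }

set_option maxHeartbeats 1000000 in
/-- Lagacé's lower bound: the test basis `B̃ = diag(1,…,1,κ/2)` satisfies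
`Λ_{k,d}(B̃) = 2^{2-2/d} π² κ^{2/d}` where `κ = 2⌈k/2⌉`. -/
theorem Lamk_test_lattice (d k : ℕ) (hd : 1 ≤ d) (hk : 1 ≤ k) (κ : ℝ)
    (hκ : κ = 2 * ((k + 1) / 2 : ℕ))
    (B : Matrix (Fin d) (Fin d) ℝ)
    (hB : B = Matrix.diagonal fun i : Fin d => if (i : ℕ) = d - 1 then κ / 2 else 1) :
    lamk d k B * |B.det| ^ ((2 : ℝ) / d) =
      (2 : ℝ) ^ ((2 : ℝ) - 2 / d) * π ^ 2 * κ ^ ((2 : ℝ) / d) := by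
  have hπ : (0:ℝ) < π := Real.pi_pos
  have hπ2 : (0:ℝ) < 4 * π ^ 2 := by positivity
  set K : ℕ := (k + 1) / 2 with hKdef
  have hK1 : 1 ≤ K := by omega
  have hkK : k ≤ 2 * K := by omega
  have hKk : 2 * K ≤ k + 1 := by omega
  have hκval : κ = 2 * (K : ℝ) := by rw [hκ]
  have hKR : (1:ℝ) ≤ (K : ℝ) := by exact_mod_cast hK1
  have hκ0 : (0:ℝ) < κ := by rw [hκval]; linarith
  have hκne : κ ≠ 0 := ne_of_gt hκ0
  set last : Fin d := ⟨d - 1, by omega⟩ with hlast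
  set a' : Fin d → ℝ := fun i => if (i : ℕ) = d - 1 then 2 / κ else 1 with ha'
  have hiff : ∀ i : Fin d, ((i : ℕ) = d - 1) ↔ i = last := by
    intro i; rw [Fin.ext_iff]
  have hBinv : B⁻¹ = Matrix.diagonal a' := by
    apply Matrix.inv_eq_right_inv
    rw [hB, Matrix.diagonal_mul_diagonal]
    have hmul : (fun i : Fin d => (if (i : ℕ) = d - 1 then κ / 2 else 1) * a' i)
        = fun _ => (1 : ℝ) := by
      funext i
      by_cases h : (i : ℕ) = d - 1
      · simp only [ha', h, if_true]
        field_simp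
      · simp [ha', h]
    rw [hmul, Matrix.diagonal_one]
  set F : (Fin d → ℤ) → ℝ := fun v => 4 * π ^ 2 * ∑ i, (a' i * (v i : ℝ)) ^ 2 with hF
  have hfv : ∀ v : Fin d → ℤ,
      4 * π ^ 2 * ∑ i, ((B⁻¹)ᵀ.mulVec (fun j => ((v j : ℤ) : ℝ)) i) ^ 2 = F v := by
    intro v
    rw [hBinv, Matrix.diagonal_transpose, hF]
    simp [Matrix.mulVec_diagonal]
  have hset : ∀ E : Finset (Fin d → ℤ),
      {t : ℝ | ∃ v ∈ E, t = 4 * π ^ 2 *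
        ∑ i, ((B⁻¹)ᵀ.mulVec (fun j => ((v j : ℤ) : ℝ)) i) ^ 2}
        = F '' (E : Set (Fin d → ℤ)) := by
    intro E; ext t
    simp only [Set.mem_setOf_eq, Set.mem_image, Finset.mem_coe]
    constructor
    · rintro ⟨v, hv, rfl⟩; exact ⟨v, hv, (hfv v).symm⟩
    · rintro ⟨v, hv, rfl⟩; exact ⟨v, hv, (hfv v).symm⟩
  set g : ℤ → (Fin d → ℤ) := fun m i => if i = last then m else 0 with hg
  have hginj : Function.Injective g := by
    intro m m' h
    have := congrFun h last
    simpa [hg] using this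
  have hFg : ∀ m : ℤ, F (g m) = 4 * π ^ 2 * (2 / κ * (m : ℝ)) ^ 2 := by
    intro m
    show 4 * π ^ 2 * ∑ i, (a' i * ((g m i : ℤ) : ℝ)) ^ 2 = 4 * π ^ 2 * (2 / κ * (m : ℝ)) ^ 2
    congr 1
    have hterm : ∀ i : Fin d, (a' i * ((g m i : ℤ) : ℝ)) ^ 2
        = if i = last then (2 / κ * (m : ℝ)) ^ 2 else 0 := by
      intro i
      by_cases h : i = last
      · have hi : (i : ℕ) = d - 1 := (hiff i).mpr h
        subst h; simp [hg, ha', hi]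
      · simp [hg, h]
    rw [Finset.sum_congr rfl fun i _ => hterm i]
    simp
  -- every vector with value < 4π² is of the form g m with |m| ≤ K - 1
  have hsmall : ∀ v : Fin d → ℤ, F v < 4 * π ^ 2 →
      ∃ m ∈ Finset.Icc (1 - (K : ℤ)) ((K : ℤ) - 1), v = g m := by
    intro v hv
    have hsum : ∑ i, (a' i * (v i : ℝ)) ^ 2 < 1 := by
      by_contra h
      push_neg at h
      have : 4 * π ^ 2 * 1 ≤ 4 * π ^ 2 * ∑ i, (a' i * (v i : ℝ)) ^ 2 :=
        mul_le_mul_of_nonneg_left h (le_of_lt hπ2)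
      rw [hF] at hv
      simp only at hv
      linarith
    have hterm : ∀ i : Fin d, (a' i * (v i : ℝ)) ^ 2 < 1 := by
      intro i
      have h1 : (a' i * (v i : ℝ)) ^ 2 ≤ ∑ j, (a' j * (v j : ℝ)) ^ 2 :=
        Finset.single_le_sum (f := fun j => (a' j * (v j : ℝ)) ^ 2)
          (fun j _ => sq_nonneg _) (Finset.mem_univ i)
      linarith
    refine ⟨v last, ?_, ?_⟩
    · have h := hterm last
      have ha : a' last = 2 / κ := by
        simp [ha', hlast]
      rw [ha, hκval] at h
      have hKpos : (0:ℝ) < (K : ℝ) := by linarith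
      have h2 : ((v last : ℝ)) ^ 2 < (K : ℝ) ^ 2 := by
        have he : 2 / (2 * (K : ℝ)) * (v last : ℝ) = (v last : ℝ) / (K : ℝ) := by
          field_simp
        rw [he, div_pow] at h
        have := (div_lt_one (by positivity : (0:ℝ) < (K:ℝ)^2)).mp h
        linarith
      have h3 : (v last) ^ 2 < (K : ℤ) ^ 2 := by exact_mod_cast h2
      rw [Finset.mem_Icc]
      constructor
      · nlinarith [sq_nonneg (v last + (K : ℤ))]
      · nlinarith [sq_nonneg (v last - (K : ℤ))]
    · funext i
      by_cases h : i = last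
      · simp [hg, h]
      · have h1 := hterm i
        have hi : ¬ ((i : ℕ) = d - 1) := fun hh => h ((hiff i).mp hh)
        have ha : a' i = 1 := by simp [ha', hi]
        rw [ha, one_mul] at h1
        have h2 : (v i) ^ 2 < 1 := by exact_mod_cast h1
        have h3 : v i = 0 := by nlinarith [sq_nonneg (v i)]
        simp [hg, h, h3]
  -- the test finset
  set E₀ : Finset (Fin d → ℤ) := (Finset.Icc ((K : ℤ) - k) (K : ℤ)).image g with hE₀
  have hE₀card : E₀.card = k + 1 := by
    rw [hE₀, Finset.card_image_of_injective _ hginj, Int.card_Icc]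
    omega
  have hgK : g (K : ℤ) ∈ E₀ := by
    rw [hE₀, Finset.mem_image]
    exact ⟨(K : ℤ), Finset.mem_Icc.mpr ⟨by omega, le_refl _⟩, rfl⟩
  have hE₀bound : ∀ t ∈ F '' (E₀ : Set (Fin d → ℤ)), t ≤ 4 * π ^ 2 := by
    rintro t ⟨v, hv, rfl⟩
    rw [Finset.mem_coe, hE₀, Finset.mem_image] at hv
    obtain ⟨m, hm, rfl⟩ := hv
    rw [Finset.mem_Icc] at hm
    rw [hFg]
    have hmabs : |(m : ℝ)| ≤ (K : ℝ) := by
      rw [abs_le]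
      constructor
      · have : -(K : ℤ) ≤ m := by omega
        exact_mod_cast this
      · exact_mod_cast hm.2
    have hKpos : (0:ℝ) < (K : ℝ) := by linarith
    have h1 : (2 / κ * (m : ℝ)) ^ 2 ≤ 1 := by
      rw [hκval]
      have he : 2 / (2 * (K : ℝ)) * (m : ℝ) = (m : ℝ) / (K : ℝ) := by field_simp
      rw [he, div_pow]
      rw [div_le_one (by positivity)]
      have := sq_abs (m : ℝ)
      nlinarith [abs_nonneg (m : ℝ)]
    have h2 := mul_le_mul_of_nonneg_left h1 (le_of_lt hπ2)
    linarith
  -- lamk = 4π²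
  have hlam : lamk d k B = 4 * π ^ 2 := by
    unfold lamk
    have hlb : ∀ r ∈ { r : ℝ | ∃ E : Finset (Fin d → ℤ), E.card = k + 1 ∧
        r = sSup { t : ℝ | ∃ v ∈ E,
          t = 4 * π ^ 2 * ∑ i, ((B⁻¹)ᵀ.mulVec (fun j => ((v j : ℤ) : ℝ)) i) ^ 2 } },
        4 * π ^ 2 ≤ r := by
      rintro r ⟨E, hcard, rfl⟩
      rw [hset E]
      -- E has an element with F v ≥ 4π²
      have : ∃ v ∈ E, 4 * π ^ 2 ≤ F v := by
        by_contra hcon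
        push_neg at hcon
        have hsub : E ⊆ (Finset.Icc (1 - (K : ℤ)) ((K : ℤ) - 1)).image g := by
          intro v hv
          obtain ⟨m, hm, rfl⟩ := hsmall v (hcon v hv)
          exact Finset.mem_image.mpr ⟨m, hm, rfl⟩
        have hc := Finset.card_le_card hsub
        rw [hcard, Finset.card_image_of_injective _ hginj, Int.card_Icc] at hc
        omega
      obtain ⟨v, hv, hge⟩ := this
      have hmem : F v ∈ F '' (E : Set (Fin d → ℤ)) := ⟨v, hv, rfl⟩
      have hbdd : BddAbove (F '' (E : Set (Fin d → ℤ))) :=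
        (E.finite_toSet.image F).bddAbove
      exact le_trans hge (le_csSup hbdd hmem)
    have hmem₀ : sSup (F '' (E₀ : Set (Fin d → ℤ))) ∈
        { r : ℝ | ∃ E : Finset (Fin d → ℤ), E.card = k + 1 ∧
        r = sSup { t : ℝ | ∃ v ∈ E,
          t = 4 * π ^ 2 * ∑ i, ((B⁻¹)ᵀ.mulVec (fun j => ((v j : ℤ) : ℝ)) i) ^ 2 } } :=
      ⟨E₀, hE₀card, by rw [hset E₀]⟩
    apply le_antisymm
    · refine csInf_le_of_le ⟨4 * π ^ 2, fun r hr => hlb r hr⟩ hmem₀ ?_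
      exact csSup_le ⟨F (g (K : ℤ)), ⟨g (K : ℤ), hgK, rfl⟩⟩ hE₀bound
    · exact le_csInf ⟨_, hmem₀⟩ hlb
  -- determinant
  have hdet : |B.det| = κ / 2 := by
    rw [hB, Matrix.det_diagonal]
    have hprod : ∏ i : Fin d, (if (i : ℕ) = d - 1 then κ / 2 else 1) = κ / 2 := by
      have : (fun i : Fin d => if (i : ℕ) = d - 1 then κ / 2 else 1)
          = fun i : Fin d => if i = last then κ / 2 else 1 := by
        funext i; exact if_congr (hiff i) rfl rfl
      rw [this]
      simp
    rw [hprod, abs_of_pos (by linarith)]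
  rw [hlam, hdet]
  rw [Real.div_rpow (le_of_lt hκ0) (by norm_num : (0:ℝ) ≤ 2)]
  rw [Real.rpow_sub (by norm_num : (0:ℝ) < 2)]
  have h4 : (2:ℝ) ^ (2:ℝ) = 4 := by
    rw [show ((2:ℝ) : ℝ) = ((2:ℕ) : ℝ) by norm_num, Real.rpow_natCast]
    norm_num
  rw [h4]
  ring
end
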